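/- Let G be a group and N a normal subgroup of G. Then for x ∈ G, the coset Nx belongs to S(G/N) if and only if x^{|G:H|} ∈ H for every subgroup H of finite index in G containing N. In particular, if R(G) denotes the finite residual of G, then S(G/R(G)) = S(G)/R(G). -/

import Mathlib

/-- `S(G)` is the set of `x ∈ G` such that `x ^ |G:H| ∈ H` for every finite-index
subgroup `H ≤ G`. -/
def Sset (G : Type*) [Group G] : Set G :=
  {x : G | ∀ H : Subgroup G, H.index ≠ 0 → x ^ H.index ∈ H}

/-- The finite residual `R(G)`: the intersection of all finite-index subgroups of `G`. -/
def finiteResidual (G : Type*) [Group G] : Subgroup G :=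
  sInf {H : Subgroup G | H.index ≠ 0}

instance finiteResidual_normal (G : Type*) [Group G] : (finiteResidual G).Normal := by
  constructor
  intro n hn g
  simp only [finiteResidual, Subgroup.mem_sInf, Set.mem_setOf_eq] at hn ⊢
  intro H hH
  have h2 : (H.comap (MulAut.conj g).toMonoidHom).index ≠ 0 := by
    rw [H.index_comap_of_surjective (MulEquiv.surjective _)]
    exact hH
  have := hn (H.comap (MulAut.conj g).toMonoidHom) h2
  simpa [Subgroup.mem_comap] using this

lemma aux_mem_iff {G : Type*} [Group G] (N : Subgroup G) [N.Normal] (x : G) :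
    (x : G ⧸ N) ∈ Sset (G ⧸ N) ↔
      ∀ H : Subgroup G, N ≤ H → H.index ≠ 0 → x ^ H.index ∈ H := by
  constructor
  · intro hx H hNH hH
    have hcm : (H.map (QuotientGroup.mk' N)).comap (QuotientGroup.mk' N) = H := by
      rw [Subgroup.comap_map_eq_self]
      simpa [QuotientGroup.ker_mk'] using hNH
    have hidx : (H.map (QuotientGroup.mk' N)).index = H.index := by
      conv_rhs => rw [← hcm]
      rw [Subgroup.index_comap_of_surjective _ (QuotientGroup.mk'_surjective N)]
    have hfin : (H.map (QuotientGroup.mk' N)).index ≠ 0 := by rw [hidx]; exact hH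
    have h1 := hx _ hfin
    rw [hidx] at h1
    have h2 : x ^ H.index ∈ (H.map (QuotientGroup.mk' N)).comap (QuotientGroup.mk' N) := by
      rw [Subgroup.mem_comap, map_pow]
      exact h1
    rwa [hcm] at h2
  · intro hx H' hH'
    have hidx : (H'.comap (QuotientGroup.mk' N)).index = H'.index :=
      Subgroup.index_comap_of_surjective _ (QuotientGroup.mk'_surjective N)
    have hle : N ≤ H'.comap (QuotientGroup.mk' N) := by
      intro n hn
      rw [Subgroup.mem_comap, show (QuotientGroup.mk' N) n = 1 from
        (QuotientGroup.eq_one_iff n).2 hn]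
      exact H'.one_mem
    have := hx _ hle (by rw [hidx]; exact hH')
    rw [hidx] at this
    simpa [Subgroup.mem_comap] using this

/-- For `N ⊴ G`, the coset `Nx` lies in `S(G/N)` iff `x ^ |G:H| ∈ H` for every
finite-index subgroup `H ≤ G` containing `N`.  In particular,
`S(G / R(G)) = S(G) / R(G)` (the image of `S(G)` in the quotient). -/
theorem mem_sSet_quotient_iff {G : Type*} [Group G] (N : Subgroup G) [N.Normal] :
    (∀ x : G, (x : G ⧸ N) ∈ Sset (G ⧸ N) ↔
      ∀ H : Subgroup G, N ≤ H → H.index ≠ 0 → x ^ H.index ∈ H) ∧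
    Sset (G ⧸ finiteResidual G) = QuotientGroup.mk '' Sset G := by
  refine ⟨aux_mem_iff N, ?_⟩
  ext q
  obtain ⟨x, rfl⟩ := QuotientGroup.mk_surjective q
  constructor
  · intro hq
    refine ⟨x, ?_, rfl⟩
    intro H hH
    exact (aux_mem_iff (finiteResidual G) x).1 hq H
      (fun n hn => Subgroup.mem_sInf.1 hn H hH) hH
  · rintro ⟨y, hy, hxy⟩
    rw [← hxy]
    exact (aux_mem_iff (finiteResidual G) y).2 (fun H _ hH => hy H hH)
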